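/- In the setting of the one-dimensional semi-discrete finite-volume scheme with no-flux boundary conditions (H : [0,∞) → ℝ convex and C¹, values V_i ∈ ℝ, symmetric weights W_j = W_{−j}, ξ_i = H′(ρ_i) + V_i + Δx Σ_k W_{i−k} ρ_k, u_{i+1/2} = −(ξ_{i+1} − ξ_i)/Δx, F_{i+1/2} = ρ_i(u_{i+1/2})⁺ + ρ_{i+1}(u_{i+1/2})⁻ for interior edges, F_{1/2} = F_{N+1/2} = 0, dρ_i/dt = −(F_{i+1/2} − F_{i−1/2})/Δx), let (ρ_i(t)) be a C¹ solution on [0,T] with ρ_i(0) ≥ 0 for all i. Define the semi-discrete free energy F_Δ(t) = Σ_i H(ρ_i(t)) Δx + Σ_i V_i ρ_i(t) Δx + (1/2) Σ_i Σ_k W_{i−k} ρ_i(t) ρ_k(t) Δx². Then for all t ∈ (0,T), d/dt F_Δ(t) ≤ −Σ_{i=1}^{N−1} min{ρ_i(t), ρ_{i+1}(t)} |u_{i+1/2}(t)|² Δx ≤ 0. -/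

import Mathlib

open Real Set Topology Filter Asymptotics

noncomputable section

/-- Discrete potential `ξ_i = H′(ρ_i) + V_i + Δx Σ_{k<N} W_{i−k} ρ_k`
(cells are indexed by `i = 0, …, N−1`). -/
def xiSD (N : ℕ) (Δx : ℝ) (H' : ℝ → ℝ) (V : ℕ → ℝ) (W : ℤ → ℝ)
    (ρ : ℕ → ℝ) (i : ℕ) : ℝ :=
  H' (ρ i) + V i + Δx * ∑ k ∈ Finset.range N, W ((i : ℤ) - (k : ℤ)) * ρ k

/-- Discrete velocity at the edge `e` between cells `e−1` and `e`
(for `1 ≤ e ≤ N−1`): `u_{e−1/2+1} = −(ξ_e − ξ_{e−1})/Δx`. -/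
def velSD (N : ℕ) (Δx : ℝ) (H' : ℝ → ℝ) (V : ℕ → ℝ) (W : ℤ → ℝ)
    (ρ : ℕ → ℝ) (e : ℕ) : ℝ :=
  -(xiSD N Δx H' V W ρ e - xiSD N Δx H' V W ρ (e - 1)) / Δx

/-- Upwind flux at edge `e`; the no-flux boundary conditions impose
`F_0 = F_N = 0`, and at interior edges
`F_e = ρ_{e−1} (u_e)⁺ + ρ_e (u_e)⁻` with `(s)⁺ = max{s,0}`, `(s)⁻ = min{s,0}`. -/
def fluxSD (N : ℕ) (Δx : ℝ) (H' : ℝ → ℝ) (V : ℕ → ℝ) (W : ℤ → ℝ)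
    (ρ : ℕ → ℝ) (e : ℕ) : ℝ :=
  if e = 0 ∨ N ≤ e then 0
  else ρ (e - 1) * max (velSD N Δx H' V W ρ e) 0
        + ρ e * min (velSD N Δx H' V W ρ e) 0

/-- The semi-discrete free energy
`F_Δ = Σ_i H(ρ_i) Δx + Σ_i V_i ρ_i Δx + (1/2) Σ_i Σ_k W_{i−k} ρ_i ρ_k Δx²`. -/
def FdiscSD (N : ℕ) (Δx : ℝ) (H : ℝ → ℝ) (V : ℕ → ℝ) (W : ℤ → ℝ)
    (ρ : ℕ → ℝ) : ℝ :=
  (∑ i ∈ Finset.range N, H (ρ i) * Δx) + (∑ i ∈ Finset.range N, V i * ρ i * Δx)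
    + (1 / 2) * ∑ i ∈ Finset.range N, ∑ k ∈ Finset.range N,
        W ((i : ℤ) - (k : ℤ)) * ρ i * ρ k * Δx ^ 2

private lemma abel_sum' (χ F : ℕ → ℝ) (N : ℕ) :
    ∑ i ∈ Finset.range N, χ i * (F (i + 1) - F i)
      = χ (N - 1) * F N - χ 0 * F 0
        + ∑ e ∈ Finset.Ico 1 N, (χ (e - 1) - χ e) * F e := by
  induction N with
  | zero => simp
  | succ n ih =>
    rw [Finset.sum_range_succ, ih]
    rcases Nat.eq_zero_or_pos n with hn | hn
    · subst hn; simp; ring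
    · rw [Finset.sum_Ico_succ_top hn]
      have h1 : n + 1 - 1 = n := by omega
      rw [h1]
      ring

private lemma negpart_hasDerivWithinAt {f : ℝ → ℝ} {f' a : ℝ}
    (hf : HasDerivWithinAt f f' (Ici a) a) :
    HasDerivWithinAt (fun s => max (-f s) 0)
      (if f a < 0 then -f' else if f a = 0 then max (-f') 0 else 0) (Ici a) a := by
  rcases lt_trichotomy (f a) 0 with h | h | h
  · rw [if_pos h]
    refine hf.neg.congr_of_eventuallyEq ?_ (by rw [max_eq_left (by linarith : (0:ℝ) ≤ -f a)]; rfl)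
    filter_upwards [hf.continuousWithinAt (Iio_mem_nhds h)] with s hs
    exact max_eq_left (by simp only [mem_preimage, mem_Iio] at hs; linarith)
  · rw [if_neg (by rw [h]; exact lt_irrefl 0), if_pos h]
    rw [hasDerivWithinAt_iff_isLittleO] at hf ⊢
    have hb : (fun s => max (-f s) 0 - max (-f a) 0 - (s - a) • max (-f') 0)
        =O[𝓝[Ici a] a] fun s => f s - f a - (s - a) • f' := by
      apply Asymptotics.IsBigO.of_bound 1
      filter_upwards [self_mem_nhdsWithin] with s hs
      have hs' : a ≤ s := hs
      rw [one_mul]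
      have h1 : (s - a) • max (-f') 0 = max (-((s - a) * f')) 0 := by
        rcases le_total 0 f' with h2 | h2
        · rw [max_eq_right (by linarith : -f' ≤ 0),
            max_eq_right (by nlinarith : -((s - a) * f') ≤ 0)]
          simp
        · rw [max_eq_left (by linarith : (0:ℝ) ≤ -f'),
            max_eq_left (by nlinarith : (0:ℝ) ≤ -((s - a) * f'))]
          rw [smul_eq_mul]; ring
      rw [h1, h]
      simp only [neg_zero, max_self, sub_zero, smul_eq_mul, Real.norm_eq_abs]
      calc |max (-f s) 0 - max (-((s - a) * f')) 0| ≤ |(-f s) - (-((s - a) * f'))| :=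
            abs_max_sub_max_le_abs _ _ _
        _ = |f s - (s - a) * f'| := by rw [← abs_neg]; congr 1; ring
    exact hb.trans_isLittleO hf
  · rw [if_neg (by linarith), if_neg (by linarith)]
    refine (hasDerivWithinAt_const a _ 0).congr_of_eventuallyEq ?_
      (by rw [max_eq_right (by linarith : -f a ≤ 0)])
    filter_upwards [hf.continuousWithinAt (Ioi_mem_nhds h)] with s hs
    exact max_eq_right (by simp only [mem_preimage, mem_Ioi] at hs; linarith)

private lemma sum_indicator_flux_nonpos (N : ℕ) (Δx : ℝ) (hΔx : 0 < Δx)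
    (ρ : ℕ → ℝ) (F : ℕ → ℝ) (u : ℕ → ℝ)
    (hF0 : F 0 = 0) (hFN : F N = 0)
    (hFe : ∀ e, 1 ≤ e → e < N → F e = ρ (e - 1) * max (u e) 0 + ρ e * min (u e) 0) :
    ∑ i ∈ Finset.range N,
      (if ρ i < 0 then -(-(F (i + 1) - F i) / Δx)
       else if ρ i = 0 then max (-(-(F (i + 1) - F i) / Δx)) 0 else 0) ≤ 0 := by
  set χ : ℕ → ℝ := fun i => if ρ i < 0 then 1
      else if ρ i = 0 ∧ 0 ≤ F (i + 1) - F i then 1 else 0 with hχ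
  have hχ01 : ∀ i, χ i = 0 ∨ χ i = 1 := by
    intro i; rw [hχ]; dsimp only; split_ifs <;> simp
  have hχ1 : ∀ i, χ i = 1 → ρ i ≤ 0 := by
    intro i h; rw [hχ] at h; dsimp only at h; split_ifs at h with h1 h2
    · exact le_of_lt h1
    · exact le_of_eq h2.1
    · norm_num at h
  have hχ0 : ∀ i, χ i = 0 → 0 ≤ ρ i := by
    intro i h; rw [hχ] at h; dsimp only at h; split_ifs at h with h1 h2
    · norm_num at h
    · norm_num at h
    · exact le_of_not_gt h1
  have hterm : ∀ i, (if ρ i < 0 then -(-(F (i + 1) - F i) / Δx)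
       else if ρ i = 0 then max (-(-(F (i + 1) - F i) / Δx)) 0 else 0)
      = χ i * ((F (i + 1) - F i) / Δx) := by
    intro i
    by_cases h1 : ρ i < 0
    · rw [if_pos h1, hχ]; dsimp only; rw [if_pos h1, one_mul]; ring
    · rw [if_neg h1]
      by_cases h2 : ρ i = 0
      · rw [if_pos h2]
        have hd : -(-(F (i + 1) - F i) / Δx) = (F (i + 1) - F i) / Δx := by ring
        rw [hd]
        by_cases h3 : 0 ≤ F (i + 1) - F i
        · have hc : χ i = 1 := by rw [hχ]; dsimp only; rw [if_neg h1, if_pos ⟨h2, h3⟩]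
          rw [hc, one_mul, max_eq_left (div_nonneg h3 hΔx.le)]
        · have hc : χ i = 0 := by
            rw [hχ]; dsimp only; rw [if_neg h1, if_neg (by tauto)]
          rw [hc, zero_mul, max_eq_right]
          exact le_of_lt (div_neg_of_neg_of_pos (lt_of_not_ge h3) hΔx)
      · rw [if_neg h2]
        have hc : χ i = 0 := by rw [hχ]; dsimp only; rw [if_neg h1, if_neg (by tauto)]
        rw [hc, zero_mul]
  rw [Finset.sum_congr rfl fun i _ => hterm i]
  have hsum : ∑ i ∈ Finset.range N, χ i * ((F (i + 1) - F i) / Δx)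
      = (∑ i ∈ Finset.range N, χ i * (F (i + 1) - F i)) / Δx := by
    rw [Finset.sum_div]
    exact Finset.sum_congr rfl fun i _ => (mul_div_assoc _ _ _).symm
  rw [hsum, abel_sum' χ F N, hF0, hFN]
  have hedge : ∀ e ∈ Finset.Ico 1 N, (χ (e - 1) - χ e) * F e ≤ 0 := by
    intro e he
    obtain ⟨he1, he2⟩ := Finset.mem_Ico.1 he
    rw [hFe e he1 he2]
    have hm1 : (0:ℝ) ≤ max (u e) 0 := le_max_right _ _
    have hm2 : min (u e) 0 ≤ 0 := min_le_right _ _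
    rcases hχ01 (e - 1) with h1 | h1 <;> rcases hχ01 e with h2 | h2 <;> rw [h1, h2]
    · simp
    · have ha := hχ0 _ h1; have hb := hχ1 _ h2
      nlinarith
    · have ha := hχ1 _ h1; have hb := hχ0 _ h2
      nlinarith
    · simp
  have hle := Finset.sum_nonpos hedge
  have hnum : χ (N - 1) * 0 - χ 0 * 0 + ∑ e ∈ Finset.Ico 1 N, (χ (e - 1) - χ e) * F e ≤ 0 := by
    simpa using hle
  exact div_nonpos_of_nonpos_of_nonneg hnum hΔx.le

/-- Semi-discrete energy dissipation. Along a `C¹` solution of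
the semi-discrete finite-volume scheme with nonnegative initial data, the
semi-discrete free energy satisfies, for `t ∈ (0,T)`,
`d/dt F_Δ(t) ≤ −Σ_{e=1}^{N−1} min{ρ_{e−1}(t), ρ_e(t)} |u_e(t)|² Δx ≤ 0`. -/
theorem semidiscrete_energy_dissipation
    (N : ℕ) (hN : 2 ≤ N) (Δx T : ℝ) (hΔx : 0 < Δx) (hT : 0 < T)
    (H H' : ℝ → ℝ) (hHconv : ConvexOn ℝ (Ici 0) H)
    (hH' : ∀ s ∈ Ici (0 : ℝ), HasDerivWithinAt H (H' s) (Ici 0) s)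
    (hH'cont : ContinuousOn H' (Ici 0))
    (V : ℕ → ℝ) (W : ℤ → ℝ) (hWsymm : ∀ j : ℤ, W (-j) = W j)
    (ρ : ℝ → ℕ → ℝ)
    (hC1 : ∀ i < N, ContDiffOn ℝ 1 (fun t => ρ t i) (Icc 0 T))
    (hODE : ∀ t ∈ Icc (0 : ℝ) T, ∀ i < N,
      HasDerivWithinAt (fun s => ρ s i)
        (-(fluxSD N Δx H' V W (ρ t) (i + 1) - fluxSD N Δx H' V W (ρ t) i) / Δx)
        (Icc 0 T) t)
    (h0 : ∀ i < N, 0 ≤ ρ 0 i) :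
    ∀ t ∈ Ioo (0 : ℝ) T, ∃ D : ℝ,
      HasDerivAt (fun s => FdiscSD N Δx H V W (ρ s)) D t ∧
      D ≤ -(∑ e ∈ Finset.Ico 1 N,
            min (ρ t (e - 1)) (ρ t e) * (velSD N Δx H' V W (ρ t) e) ^ 2 * Δx) ∧
      -(∑ e ∈ Finset.Ico 1 N,
            min (ρ t (e - 1)) (ρ t e) * (velSD N Δx H' V W (ρ t) e) ^ 2 * Δx) ≤ 0 := by
  have hΔne : Δx ≠ 0 := ne_of_gt hΔx
  -- Step 1: nonnegativity of ρ on [0, T]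
  have key : ∀ τ ∈ Icc (0:ℝ) T, ∀ i, i < N → 0 ≤ ρ τ i := by
    have hgc : ContinuousOn (fun τ => ∑ i ∈ Finset.range N, max (-ρ τ i) 0) (Icc 0 T) := by
      apply continuousOn_finset_sum
      intro i hi
      exact (((hC1 i (Finset.mem_range.1 hi)).continuousOn).neg).sup continuousOn_const
    have hgd : ∀ x ∈ Ico (0:ℝ) T,
        HasDerivWithinAt (fun τ => ∑ i ∈ Finset.range N, max (-ρ τ i) 0)
          ((fun x => ∑ i ∈ Finset.range N,
            (if ρ x i < 0 then
              -(-(fluxSD N Δx H' V W (ρ x) (i + 1) - fluxSD N Δx H' V W (ρ x) i) / Δx)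
             else if ρ x i = 0 then
              max (-(-(fluxSD N Δx H' V W (ρ x) (i + 1) - fluxSD N Δx H' V W (ρ x) i) / Δx)) 0
             else 0)) x) (Ici x) x := by
      intro x hx
      apply HasDerivWithinAt.fun_sum
      intro i hi
      have hmem : Icc (0:ℝ) T ∈ 𝓝[Ici x] x := by
        refine mem_nhdsWithin.2 ⟨Iio T, isOpen_Iio, hx.2, ?_⟩
        rintro y ⟨hy1, hy2⟩
        exact ⟨le_trans hx.1 hy2, le_of_lt hy1⟩
      have hρd := (hODE x (Ico_subset_Icc_self hx) i (Finset.mem_range.1 hi)).mono_of_mem_nhdsWithin hmem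
      exact negpart_hasDerivWithinAt hρd
    have hbound : ∀ x ∈ Ico (0:ℝ) T,
        (∑ i ∈ Finset.range N,
          (if ρ x i < 0 then
            -(-(fluxSD N Δx H' V W (ρ x) (i + 1) - fluxSD N Δx H' V W (ρ x) i) / Δx)
           else if ρ x i = 0 then
            max (-(-(fluxSD N Δx H' V W (ρ x) (i + 1) - fluxSD N Δx H' V W (ρ x) i) / Δx)) 0
           else 0)) ≤ (fun _ : ℝ => (0:ℝ)) x := by
      intro x _
      refine sum_indicator_flux_nonpos N Δx hΔx (ρ x) (fun e => fluxSD N Δx H' V W (ρ x) e)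
        (fun e => velSD N Δx H' V W (ρ x) e) (by simp [fluxSD]) (by simp [fluxSD]) ?_
      intro e he1 he2
      show fluxSD N Δx H' V W (ρ x) e
          = ρ x (e - 1) * max (velSD N Δx H' V W (ρ x) e) 0
            + ρ x e * min (velSD N Δx H' V W (ρ x) e) 0
      rw [fluxSD, if_neg (by push_neg; omega)]
    have hg0 : (∑ i ∈ Finset.range N, max (-ρ 0 i) 0) ≤ (fun _ : ℝ => (0:ℝ)) 0 := by
      have : ∀ i ∈ Finset.range N, max (-ρ 0 i) 0 = 0 := fun i hi =>
        max_eq_right (neg_nonpos.2 (h0 i (Finset.mem_range.1 hi)))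
      rw [Finset.sum_congr rfl this]
      simp
    have hmain := image_le_of_deriv_right_le_deriv_boundary hgc hgd hg0
      continuousOn_const (fun x _ => hasDerivWithinAt_const x _ 0) hbound
    intro τ hτ i hi
    have h1 : (∑ j ∈ Finset.range N, max (-ρ τ j) 0) = 0 :=
      le_antisymm (hmain hτ) (Finset.sum_nonneg fun j _ => le_max_right _ _)
    have h2 := (Finset.sum_eq_zero_iff_of_nonneg
      (fun j _ => le_max_right (-ρ τ j) 0)).1 h1 i (Finset.mem_range.2 hi)
    have h3 : -ρ τ i ≤ 0 := le_of_le_of_eq (le_max_left _ _) h2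
    linarith
  -- Step 2: the dissipation inequality at interior times
  intro t ht
  have htmem : t ∈ Icc (0:ℝ) T := ⟨ht.1.le, ht.2.le⟩
  have hnhds : Icc (0:ℝ) T ∈ 𝓝 t := Icc_mem_nhds ht.1 ht.2
  set r : ℕ → ℝ := fun i =>
    -(fluxSD N Δx H' V W (ρ t) (i + 1) - fluxSD N Δx H' V W (ρ t) i) / Δx with hrdef
  have hρd : ∀ i, i < N → HasDerivAt (fun s => ρ s i) (r i) t := fun i hi =>
    (hODE t htmem i hi).hasDerivAt hnhds
  have hD : HasDerivAt (fun s => FdiscSD N Δx H V W (ρ s))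
      ((∑ i ∈ Finset.range N, H' (ρ t i) * r i * Δx)
        + (∑ i ∈ Finset.range N, V i * r i * Δx)
        + (1 / 2) * ∑ i ∈ Finset.range N, ∑ k ∈ Finset.range N,
            (W ((i:ℤ) - (k:ℤ)) * r i * ρ t k + W ((i:ℤ) - (k:ℤ)) * ρ t i * r k) * Δx ^ 2) t := by
    have h1 : HasDerivAt (fun s => ∑ i ∈ Finset.range N, H (ρ s i) * Δx)
        (∑ i ∈ Finset.range N, H' (ρ t i) * r i * Δx) t := by
      apply HasDerivAt.fun_sum
      intro i hi
      have hiN := Finset.mem_range.1 hi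
      have hmap : MapsTo (fun s => ρ s i) (Icc (0:ℝ) T) (Ici (0:ℝ)) :=
        fun s hs => key s hs i hiN
      have hcomp : HasDerivWithinAt (fun s => H (ρ s i)) (H' (ρ t i) * r i) (Icc 0 T) t :=
        (hH' (ρ t i) (key t htmem i hiN)).comp t (hODE t htmem i hiN) hmap
      exact (hcomp.hasDerivAt hnhds).mul_const Δx
    have h2 : HasDerivAt (fun s => ∑ i ∈ Finset.range N, V (i:ℕ) * ρ s i * Δx)
        (∑ i ∈ Finset.range N, V i * r i * Δx) t := by
      apply HasDerivAt.fun_sum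
      intro i hi
      exact ((hρd i (Finset.mem_range.1 hi)).const_mul (V i)).mul_const Δx
    have h3 : HasDerivAt (fun s => (1 / 2 : ℝ) * ∑ i ∈ Finset.range N, ∑ k ∈ Finset.range N,
          W ((i:ℤ) - (k:ℤ)) * ρ s i * ρ s k * Δx ^ 2)
        ((1 / 2) * ∑ i ∈ Finset.range N, ∑ k ∈ Finset.range N,
          (W ((i:ℤ) - (k:ℤ)) * r i * ρ t k + W ((i:ℤ) - (k:ℤ)) * ρ t i * r k) * Δx ^ 2) t := by
      apply HasDerivAt.const_mul
      apply HasDerivAt.fun_sum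
      intro i hi
      apply HasDerivAt.fun_sum
      intro k hk
      have hdik := (((hρd i (Finset.mem_range.1 hi)).const_mul (W ((i:ℤ) - (k:ℤ)))).mul
        (hρd k (Finset.mem_range.1 hk))).mul_const (Δx ^ 2)
      exact hdik
    exact (h1.add h2).add h3
  set ξ : ℕ → ℝ := fun i => xiSD N Δx H' V W (ρ t) i with hξdef
  set Fl : ℕ → ℝ := fun e => fluxSD N Δx H' V W (ρ t) e with hFldef
  -- algebraic identity: the derivative equals ∑ ξ_i r_i Δx
  have hswap : ∑ i ∈ Finset.range N, ∑ k ∈ Finset.range N,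
        W ((i:ℤ) - (k:ℤ)) * ρ t i * r k * Δx ^ 2
      = ∑ i ∈ Finset.range N, ∑ k ∈ Finset.range N,
        W ((i:ℤ) - (k:ℤ)) * ρ t k * r i * Δx ^ 2 := by
    rw [Finset.sum_comm]
    refine Finset.sum_congr rfl fun a _ => Finset.sum_congr rfl fun b _ => ?_
    rw [show ((b:ℤ) - (a:ℤ)) = -((a:ℤ) - (b:ℤ)) by ring, hWsymm]
  have hE1 : (∑ i ∈ Finset.range N, H' (ρ t i) * r i * Δx)
        + (∑ i ∈ Finset.range N, V i * r i * Δx)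
        + (1 / 2) * ∑ i ∈ Finset.range N, ∑ k ∈ Finset.range N,
            (W ((i:ℤ) - (k:ℤ)) * r i * ρ t k + W ((i:ℤ) - (k:ℤ)) * ρ t i * r k) * Δx ^ 2
      = ∑ i ∈ Finset.range N, ξ i * (r i * Δx) := by
    have hsplit : ∑ i ∈ Finset.range N, ∑ k ∈ Finset.range N,
          (W ((i:ℤ) - (k:ℤ)) * r i * ρ t k + W ((i:ℤ) - (k:ℤ)) * ρ t i * r k) * Δx ^ 2
        = (∑ i ∈ Finset.range N, ∑ k ∈ Finset.range N,
            W ((i:ℤ) - (k:ℤ)) * ρ t k * r i * Δx ^ 2)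
          + (∑ i ∈ Finset.range N, ∑ k ∈ Finset.range N,
            W ((i:ℤ) - (k:ℤ)) * ρ t i * r k * Δx ^ 2) := by
      rw [← Finset.sum_add_distrib]
      refine Finset.sum_congr rfl fun i _ => ?_
      rw [← Finset.sum_add_distrib]
      exact Finset.sum_congr rfl fun k _ => by ring
    rw [hsplit, hswap]
    have hcomb : (∑ i ∈ Finset.range N, H' (ρ t i) * r i * Δx)
          + (∑ i ∈ Finset.range N, V i * r i * Δx)
          + (1 / 2) * ((∑ i ∈ Finset.range N, ∑ k ∈ Finset.range N,
              W ((i:ℤ) - (k:ℤ)) * ρ t k * r i * Δx ^ 2)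
            + (∑ i ∈ Finset.range N, ∑ k ∈ Finset.range N,
              W ((i:ℤ) - (k:ℤ)) * ρ t k * r i * Δx ^ 2))
        = (∑ i ∈ Finset.range N, H' (ρ t i) * r i * Δx)
          + (∑ i ∈ Finset.range N, V i * r i * Δx)
          + (∑ i ∈ Finset.range N, ∑ k ∈ Finset.range N,
              W ((i:ℤ) - (k:ℤ)) * ρ t k * r i * Δx ^ 2) := by ring
    rw [hcomb, ← Finset.sum_add_distrib, ← Finset.sum_add_distrib]
    refine Finset.sum_congr rfl fun i _ => ?_
    have hk : ∑ k ∈ Finset.range N, W ((i:ℤ) - (k:ℤ)) * ρ t k * r i * Δx ^ 2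
        = (∑ k ∈ Finset.range N, W ((i:ℤ) - (k:ℤ)) * ρ t k) * (r i * Δx ^ 2) := by
      rw [Finset.sum_mul]
      exact Finset.sum_congr rfl fun k _ => by ring
    rw [hk, hξdef]
    dsimp only
    rw [xiSD]
    ring
  have hF0 : Fl 0 = 0 := by rw [hFldef]; simp [fluxSD]
  have hFN : Fl N = 0 := by rw [hFldef]; simp [fluxSD]
  have hrF : ∀ i, r i * Δx = -(Fl (i + 1) - Fl i) := by
    intro i
    rw [hrdef, hFldef]
    dsimp only
    field_simp
  have hE2 : ∑ i ∈ Finset.range N, ξ i * (r i * Δx)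
      = -∑ e ∈ Finset.Ico 1 N, (ξ (e - 1) - ξ e) * Fl e := by
    calc ∑ i ∈ Finset.range N, ξ i * (r i * Δx)
        = ∑ i ∈ Finset.range N, -(ξ i * (Fl (i + 1) - Fl i)) := by
          refine Finset.sum_congr rfl fun i _ => ?_
          rw [hrF i]; ring
      _ = -∑ i ∈ Finset.range N, ξ i * (Fl (i + 1) - Fl i) := by
          rw [Finset.sum_neg_distrib]
      _ = -(ξ (N - 1) * Fl N - ξ 0 * Fl 0
            + ∑ e ∈ Finset.Ico 1 N, (ξ (e - 1) - ξ e) * Fl e) := by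
          rw [abel_sum' ξ Fl N]
      _ = -∑ e ∈ Finset.Ico 1 N, (ξ (e - 1) - ξ e) * Fl e := by
          rw [hF0, hFN]; ring
  have hedge : ∀ e ∈ Finset.Ico 1 N,
      min (ρ t (e - 1)) (ρ t e) * (velSD N Δx H' V W (ρ t) e) ^ 2 * Δx
        ≤ (ξ (e - 1) - ξ e) * Fl e := by
    intro e he
    obtain ⟨he1, he2⟩ := Finset.mem_Ico.1 he
    set u := velSD N Δx H' V W (ρ t) e with hu
    have hFe : Fl e = ρ t (e - 1) * max u 0 + ρ t e * min u 0 := by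
      rw [hFldef]
      dsimp only
      rw [fluxSD, if_neg (by push_neg; omega)]
    have hξu : ξ (e - 1) - ξ e = Δx * u := by
      rw [hu, velSD, hξdef]
      dsimp only
      field_simp
      ring
    have hsq : max u 0 ^ 2 + min u 0 ^ 2 = u ^ 2 := by
      rcases le_total 0 u with h | h
      · rw [max_eq_left h, min_eq_right h]; ring
      · rw [max_eq_right h, min_eq_left h]; ring
    have h1 : u * max u 0 = max u 0 ^ 2 := by
      rcases le_total 0 u with h | h
      · rw [max_eq_left h]; ring
      · rw [max_eq_right h]; ring
    have h2 : u * min u 0 = min u 0 ^ 2 := by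
      rcases le_total 0 u with h | h
      · rw [min_eq_right h]; ring
      · rw [min_eq_left h]; ring
    rw [hFe, hξu]
    have hrhs : Δx * u * (ρ t (e - 1) * max u 0 + ρ t e * min u 0)
        = Δx * (ρ t (e - 1) * max u 0 ^ 2 + ρ t e * min u 0 ^ 2) := by
      rw [← h1, ← h2]; ring
    rw [hrhs, ← hsq]
    have hmin1 : min (ρ t (e - 1)) (ρ t e) ≤ ρ t (e - 1) := min_le_left _ _
    have hmin2 : min (ρ t (e - 1)) (ρ t e) ≤ ρ t e := min_le_right _ _
    nlinarith [mul_nonneg (sub_nonneg.2 hmin1) (sq_nonneg (max u 0)),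
      mul_nonneg (sub_nonneg.2 hmin2) (sq_nonneg (min u 0)), hΔx.le, hΔx]
  refine ⟨_, hD, ?_, ?_⟩
  · rw [hE1, hE2]
    exact neg_le_neg (Finset.sum_le_sum hedge)
  · refine neg_nonpos.2 (Finset.sum_nonneg fun e he => ?_)
    obtain ⟨he1, he2⟩ := Finset.mem_Ico.1 he
    have hm : 0 ≤ min (ρ t (e - 1)) (ρ t e) :=
      le_min (key t htmem (e - 1) (by omega)) (key t htmem e he2)
    exact mul_nonneg (mul_nonneg hm (sq_nonneg _)) hΔx.le
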